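/- Let I = [0,1] and 1 ≤ p < ∞. For every measurable h : I → ℝ one has Var_{1,1/p}(h) ≤ Var_{p,1/p}(h) ≤ 2^{1/p} · Var_p(h). In particular, the inclusions UBV_p ⊆ BV_{p,1/p} ⊆ BV_{1,1/p} hold. -/

import Mathlib

open MeasureTheory Set Filter Metric
open scoped ENNReal

noncomputable section

/-- The unit interval `I = [0,1]`. -/
def II : Set ℝ := Set.Icc 0 1

/-- The universal `p`-variation
`Var_p(g) = sup ( Σ |g(x_i) − g(x_{i+1})|^p )^{1/p}` over finite monotone sequences in `I`. -/
def uVar (p : ℝ) (g : ℝ → ℝ) : ℝ≥0∞ :=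
  ⨆ (n : ℕ) (u : Fin (n + 1) → ℝ) (_ : Monotone u) (_ : ∀ i, u i ∈ II),
    ENNReal.ofReal ((∑ i : Fin n, |g (u i.castSucc) - g (u i.succ)| ^ p) ^ (1 / p))

/-- The essential oscillation of `h` over the `ε`-ball around `x`, intersected with `I`. -/
def osc (h : ℝ → ℝ) (ε x : ℝ) : ℝ≥0∞ :=
  essSup (fun q : ℝ × ℝ => ENNReal.ofReal |h q.1 - h q.2|)
    ((volume.restrict (Metric.ball x ε ∩ II)).prod (volume.restrict (Metric.ball x ε ∩ II)))

/-- `osc_p(h,ε) = ‖osc(h,ε,·)‖_{L^p(m)}`. -/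
def oscp (p : ℝ) (h : ℝ → ℝ) (ε : ℝ) : ℝ≥0∞ := (∫⁻ x in II, osc h ε x ^ p) ^ (1 / p)

/-- `Var_{p,r}(h) = sup_{0 < ε ≤ 1} ε^{−r} osc_p(h,ε)` (cutoff `A = 1`). -/
def Varpr (p r : ℝ) (h : ℝ → ℝ) : ℝ≥0∞ :=
  ⨆ ε ∈ Set.Ioc (0 : ℝ) 1, ENNReal.ofReal (ε ^ (-r)) * oscp p h ε

/-! ### Auxiliary definitions and lemmas -/

/-- The (p-th power of the) variation of `h` on `I ∩ [0,b]`, without the outer `1/p` power. -/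
def Wf (p : ℝ) (h : ℝ → ℝ) (b : ℝ) : ℝ≥0∞ :=
  ⨆ (n : ℕ) (u : Fin (n + 1) → ℝ) (_ : Monotone u) (_ : ∀ i, u i ∈ II ∩ Set.Icc 0 b),
    ENNReal.ofReal (∑ i : Fin n, |h (u i.castSucc) - h (u i.succ)| ^ p)

lemma aux_monotone_snoc {n : ℕ} {u : Fin (n + 1) → ℝ} (hu : Monotone u) {y : ℝ}
    (hy : ∀ i, u i ≤ y) : Monotone (Fin.snoc u y : Fin (n + 2) → ℝ) := by
  rw [Fin.monotone_iff_le_succ]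
  intro i
  refine Fin.lastCases ?_ (fun j => ?_) i
  · rw [Fin.succ_last, Fin.snoc_last, Fin.snoc_castSucc]
    exact hy _
  · rw [Fin.succ_castSucc, Fin.snoc_castSucc, Fin.snoc_castSucc]
    exact hu (Fin.castSucc_le_succ j)

lemma aux_mem_snoc {s : Set ℝ} {n : ℕ} {u : Fin (n + 1) → ℝ} (hu : ∀ i, u i ∈ s) {y : ℝ}
    (hy : y ∈ s) : ∀ i, (Fin.snoc u y : Fin (n + 2) → ℝ) i ∈ s := by
  intro i
  refine Fin.lastCases ?_ (fun j => ?_) i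
  · rw [Fin.snoc_last]; exact hy
  · rw [Fin.snoc_castSucc]; exact hu j

lemma aux_sum_snoc (h : ℝ → ℝ) (p : ℝ) {n : ℕ} (v : Fin (n + 1) → ℝ) (y : ℝ) :
    ∑ i : Fin (n + 1),
        |h ((Fin.snoc v y : Fin (n + 2) → ℝ) i.castSucc)
          - h ((Fin.snoc v y : Fin (n + 2) → ℝ) i.succ)| ^ p
      = (∑ i : Fin n, |h (v i.castSucc) - h (v i.succ)| ^ p)
        + |h (v (Fin.last n)) - h y| ^ p := by
  rw [Fin.sum_univ_castSucc]
  congr 1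
  · refine Finset.sum_congr rfl fun j _ => ?_
    rw [Fin.succ_castSucc, Fin.snoc_castSucc, Fin.snoc_castSucc]
  · rw [Fin.succ_last, Fin.snoc_last, Fin.snoc_castSucc]

lemma Wf_mono (p : ℝ) (h : ℝ → ℝ) : Monotone (Wf p h) := by
  intro a b hab
  refine iSup_le fun n => iSup_le fun u => iSup_le fun hu => iSup_le fun hmem => ?_
  exact le_iSup_of_le n (le_iSup_of_le u (le_iSup_of_le hu (le_iSup_of_le
    (fun i => ⟨(hmem i).1, (hmem i).2.1, (hmem i).2.2.trans hab⟩) le_rfl)))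

lemma Wf_le (p : ℝ) (hp : 1 ≤ p) (h : ℝ → ℝ) (b : ℝ) : Wf p h b ≤ (uVar p h) ^ p := by
  have hp0 : (0 : ℝ) < p := lt_of_lt_of_le one_pos hp
  refine iSup_le fun n => iSup_le fun u => iSup_le fun hu => iSup_le fun hmem => ?_
  set S := ∑ i : Fin n, |h (u i.castSucc) - h (u i.succ)| ^ p with hS
  have hS0 : 0 ≤ S := Finset.sum_nonneg fun i _ => Real.rpow_nonneg (abs_nonneg _) p
  have key : ENNReal.ofReal S = (ENNReal.ofReal (S ^ (1 / p))) ^ p := by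
    rw [ENNReal.ofReal_rpow_of_nonneg (Real.rpow_nonneg hS0 _) hp0.le,
      ← Real.rpow_mul hS0, one_div_mul_cancel hp0.ne', Real.rpow_one]
  rw [key]
  refine ENNReal.rpow_le_rpow ?_ hp0.le
  exact le_iSup_of_le n (le_iSup_of_le u (le_iSup_of_le hu
    (le_iSup_of_le (fun i => (hmem i).1) le_rfl)))

lemma Wf_snoc (p : ℝ) (hp : 1 ≤ p) (h : ℝ → ℝ) {a b y₁ y₂ : ℝ}
    (hy₁ : y₁ ∈ II) (hy₂ : y₂ ∈ II) (hay : a ≤ y₁) (h12 : y₁ ≤ y₂) (hyb : y₂ ≤ b) :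
    Wf p h a + ENNReal.ofReal (|h y₁ - h y₂| ^ p) ≤ Wf p h b := by
  set c := ENNReal.ofReal (|h y₁ - h y₂| ^ p) with hc
  have hy₁b : y₁ ∈ II ∩ Set.Icc 0 b := ⟨hy₁, hy₁.1, h12.trans hyb⟩
  have hy₂b : y₂ ∈ II ∩ Set.Icc 0 b := ⟨hy₂, hy₂.1, hyb⟩
  have hcb : c ≤ Wf p h b := by
    set u₀ : Fin 2 → ℝ := Fin.snoc (fun _ : Fin 1 => y₁) y₂ with hu₀
    refine le_iSup_of_le 1 (le_iSup_of_le u₀ ?_)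
    have hmono : Monotone u₀ := aux_monotone_snoc monotone_const (fun _ => h12)
    have hmem : ∀ i, u₀ i ∈ II ∩ Set.Icc 0 b := aux_mem_snoc (fun _ => hy₁b) hy₂b
    refine le_iSup_of_le hmono (le_iSup_of_le hmem (le_of_eq ?_))
    have hsum : ∑ i : Fin 1, |h (u₀ i.castSucc) - h (u₀ i.succ)| ^ p
        = |h y₁ - h y₂| ^ p := by
      rw [hu₀, aux_sum_snoc h p (fun _ : Fin 1 => y₁) y₂]
      simp
    rw [hsum, hc]
  have hle : Wf p h a ≤ Wf p h b - c := by
    refine iSup_le fun n => iSup_le fun u => iSup_le fun hu => iSup_le fun hmem => ?_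
    refine ENNReal.le_sub_of_add_le_right ENNReal.ofReal_ne_top ?_
    -- the extended partition
    set v : Fin (n + 2) → ℝ := Fin.snoc u y₁ with hv
    set w : Fin (n + 3) → ℝ := Fin.snoc v y₂ with hw
    have huy : ∀ i, u i ≤ y₁ := fun i => (hmem i).2.2.trans hay
    have hvmono : Monotone v := aux_monotone_snoc hu huy
    have hvy : ∀ i, v i ≤ y₂ := aux_mem_snoc (s := Set.Iic y₂)
      (fun i => (huy i).trans h12) h12
    have hwmono : Monotone w := aux_monotone_snoc hvmono hvy
    have hab : a ≤ b := hay.trans (h12.trans hyb)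
    have hvmem : ∀ i, v i ∈ II ∩ Set.Icc 0 b :=
      aux_mem_snoc (s := II ∩ Set.Icc 0 b)
        (fun i => ⟨(hmem i).1, (hmem i).2.1, (hmem i).2.2.trans hab⟩) hy₁b
    have hwmem : ∀ i, w i ∈ II ∩ Set.Icc 0 b := aux_mem_snoc hvmem hy₂b
    have hsum : ∑ i : Fin (n + 2), |h (w i.castSucc) - h (w i.succ)| ^ p
        = ((∑ i : Fin n, |h (u i.castSucc) - h (u i.succ)| ^ p)
            + |h (u (Fin.last n)) - h y₁| ^ p) + |h (v (Fin.last (n + 1))) - h y₂| ^ p := by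
      rw [hw, aux_sum_snoc h p v y₂, hv, aux_sum_snoc h p u y₁]
    have hvlast : v (Fin.last (n + 1)) = y₁ := Fin.snoc_last _ _
    have hsum' : ENNReal.ofReal (∑ i : Fin n, |h (u i.castSucc) - h (u i.succ)| ^ p) + c
        ≤ ENNReal.ofReal (∑ i : Fin (n + 2), |h (w i.castSucc) - h (w i.succ)| ^ p) := by
      rw [hc, ← ENNReal.ofReal_add
        (Finset.sum_nonneg fun i _ => Real.rpow_nonneg (abs_nonneg _) p)
        (Real.rpow_nonneg (abs_nonneg _) p)]
      refine ENNReal.ofReal_le_ofReal ?_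
      rw [hsum, hvlast]
      have : 0 ≤ |h (u (Fin.last n)) - h y₁| ^ p := Real.rpow_nonneg (abs_nonneg _) p
      linarith
    refine hsum'.trans ?_
    exact le_iSup_of_le (n + 2) (le_iSup_of_le w (le_iSup_of_le hwmono
      (le_iSup_of_le hwmem le_rfl)))
  calc Wf p h a + c ≤ (Wf p h b - c) + c := add_le_add hle le_rfl
    _ = Wf p h b := tsub_add_cancel_of_le hcb

lemma osc_pow_le (p : ℝ) (hp : 1 ≤ p) (h : ℝ → ℝ) (hfin : uVar p h < ⊤) (ε x : ℝ) :
    osc h ε x ^ p ≤ Wf p h (x + ε) - Wf p h (x - ε) := by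
  have hp0 : (0 : ℝ) < p := lt_of_lt_of_le one_pos hp
  have hWfin : Wf p h (x - ε) ≠ ⊤ :=
    ne_top_of_le_ne_top (ENNReal.rpow_lt_top_of_nonneg hp0.le hfin.ne).ne (Wf_le p hp h _)
  set D := Wf p h (x + ε) - Wf p h (x - ε) with hD
  have smeas : MeasurableSet (Metric.ball x ε ∩ II) :=
    measurableSet_ball.inter measurableSet_Icc
  have main : ∀ z₁ z₂ : ℝ, z₁ ∈ Metric.ball x ε ∩ II → z₂ ∈ Metric.ball x ε ∩ II →
      z₁ ≤ z₂ → ENNReal.ofReal |h z₁ - h z₂| ≤ D ^ (1 / p) := by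
    intro z₁ z₂ hz₁ hz₂ h12
    have hb₁ := hz₁.1; have hb₂ := hz₂.1
    rw [Real.ball_eq_Ioo] at hb₁ hb₂
    have key : Wf p h (x - ε) + ENNReal.ofReal (|h z₁ - h z₂| ^ p) ≤ Wf p h (x + ε) :=
      Wf_snoc p hp h hz₁.2 hz₂.2 hb₁.1.le h12 hb₂.2.le
    have h2 : ENNReal.ofReal (|h z₁ - h z₂| ^ p) ≤ D := ENNReal.le_sub_of_add_le_left hWfin key
    have h3 : ENNReal.ofReal |h z₁ - h z₂|
        = (ENNReal.ofReal (|h z₁ - h z₂| ^ p)) ^ (1 / p) := by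
      rw [ENNReal.ofReal_rpow_of_nonneg (Real.rpow_nonneg (abs_nonneg _) _)
        (by positivity : (0:ℝ) ≤ 1 / p), ← Real.rpow_mul (abs_nonneg _),
        mul_one_div_cancel hp0.ne', Real.rpow_one]
    rw [h3]
    exact ENNReal.rpow_le_rpow h2 (by positivity)
  have key : osc h ε x ≤ D ^ (1 / p) := by
    rw [osc, Measure.prod_restrict]
    refine essSup_le_of_ae_le _ ?_
    refine (ae_restrict_iff' (smeas.prod smeas)).2 (ae_of_all _ ?_)
    rintro ⟨z₁, z₂⟩ ⟨hz₁, hz₂⟩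
    rcases le_total z₁ z₂ with h12 | h12
    · exact main z₁ z₂ hz₁ hz₂ h12
    · show ENNReal.ofReal |h z₁ - h z₂| ≤ D ^ (1 / p)
      rw [show |h z₁ - h z₂| = |h z₂ - h z₁| from abs_sub_comm _ _]
      exact main z₂ z₁ hz₂ hz₁ h12
  calc osc h ε x ^ p ≤ (D ^ (1 / p)) ^ p := ENNReal.rpow_le_rpow key hp0.le
    _ = D := by rw [← ENNReal.rpow_mul, one_div_mul_cancel hp0.ne', ENNReal.rpow_one]

lemma volume_II : volume II = 1 := by
  rw [II, Real.volume_Icc]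
  norm_num

lemma measurableSet_II : MeasurableSet II := measurableSet_Icc

lemma shift_lintegral (W : ℝ → ℝ≥0∞) (c : ℝ) :
    ∫⁻ x in II, W (x + c) = ∫⁻ t in Set.Icc c (1 + c), W t := by
  have hind : ∀ x : ℝ, II.indicator (fun x => W (x + c)) x
      = (Set.Icc c (1 + c)).indicator W (x + c) := by
    intro x
    by_cases hx : x ∈ II
    · rw [Set.indicator_of_mem hx, Set.indicator_of_mem]
      exact ⟨by linarith [hx.1], by linarith [hx.2]⟩
    · rw [Set.indicator_of_notMem hx, Set.indicator_of_notMem]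
      intro hmem
      exact hx ⟨by linarith [hmem.1], by linarith [hmem.2]⟩
  calc ∫⁻ x in II, W (x + c)
      = ∫⁻ x, II.indicator (fun x => W (x + c)) x := (lintegral_indicator measurableSet_II _).symm
    _ = ∫⁻ x, (Set.Icc c (1 + c)).indicator W (x + c) := by simp_rw [hind]
    _ = ∫⁻ y, (Set.Icc c (1 + c)).indicator W y :=
        lintegral_add_right_eq_self (fun y => (Set.Icc c (1 + c)).indicator W y) c
    _ = ∫⁻ t in Set.Icc c (1 + c), W t := lintegral_indicator measurableSet_Icc _

lemma integral_osc_bound (p : ℝ) (hp : 1 ≤ p) (h : ℝ → ℝ) {ε : ℝ} (hε : 0 < ε)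
    (hfin : uVar p h < ⊤) :
    ∫⁻ x in II, osc h ε x ^ p ≤ ENNReal.ofReal (2 * ε) * (uVar p h) ^ p := by
  have hp0 : (0 : ℝ) < p := lt_of_lt_of_le one_pos hp
  set T := (uVar p h) ^ p with hT
  have hTfin : T ≠ ⊤ := (ENNReal.rpow_lt_top_of_nonneg hp0.le hfin.ne).ne
  have hWle : ∀ b, Wf p h b ≤ T := fun b => Wf_le p hp h b
  have hWmono : Monotone (Wf p h) := Wf_mono p h
  have hWmeas : Measurable (Wf p h) := hWmono.measurable
  have step1 : ∫⁻ x in II, osc h ε x ^ p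
      ≤ ∫⁻ x in II, (Wf p h (x + ε) - Wf p h (x - ε)) :=
    lintegral_mono fun x => osc_pow_le p hp h hfin ε x
  refine step1.trans ?_
  have hgfin : ∫⁻ x in II, Wf p h (x - ε) ≠ ⊤ := by
    refine ne_top_of_le_ne_top ?_ (lintegral_mono fun x => hWle (x - ε))
    rw [setLIntegral_const, volume_II, mul_one]
    exact hTfin
  have hsub : ∫⁻ x in II, (Wf p h (x + ε) - Wf p h (x - ε))
      = (∫⁻ x in II, Wf p h (x + ε)) - ∫⁻ x in II, Wf p h (x - ε) := by
    refine lintegral_sub (hWmeas.comp (measurable_id.sub measurable_const)) hgfin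
      (ae_of_all _ fun x => hWmono (by linarith))
  have hshift1 : ∫⁻ x in II, Wf p h (x + ε) = ∫⁻ t in Set.Icc ε (1 + ε), Wf p h t :=
    shift_lintegral (Wf p h) ε
  have hshift2 : ∫⁻ x in II, Wf p h (x - ε) = ∫⁻ t in Set.Icc (-ε) (1 + -ε), Wf p h t := by
    simp_rw [sub_eq_add_neg]
    exact shift_lintegral (Wf p h) (-ε)
  rw [hsub, hshift1, hshift2, tsub_le_iff_right]
  have hsubset : Set.Icc ε (1 + ε) ⊆ Set.Icc (-ε) (1 + -ε) ∪ Set.Ioc (1 + -ε) (1 + ε) := by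
    rintro t ⟨h1, h2⟩
    by_cases ht : t ≤ 1 + -ε
    · exact Or.inl ⟨by linarith, ht⟩
    · exact Or.inr ⟨lt_of_not_ge ht, h2⟩
  calc ∫⁻ t in Set.Icc ε (1 + ε), Wf p h t
      ≤ ∫⁻ t in Set.Icc (-ε) (1 + -ε) ∪ Set.Ioc (1 + -ε) (1 + ε), Wf p h t :=
        lintegral_mono' (Measure.restrict_mono hsubset le_rfl) le_rfl
    _ ≤ (∫⁻ t in Set.Icc (-ε) (1 + -ε), Wf p h t)
        + ∫⁻ t in Set.Ioc (1 + -ε) (1 + ε), Wf p h t := lintegral_union_le _ _ _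
    _ ≤ (∫⁻ t in Set.Icc (-ε) (1 + -ε), Wf p h t) + ENNReal.ofReal (2 * ε) * T := by
        refine add_le_add_right ?_ _
        calc ∫⁻ t in Set.Ioc (1 + -ε) (1 + ε), Wf p h t
            ≤ ∫⁻ _ in Set.Ioc (1 + -ε) (1 + ε), T := lintegral_mono fun t => hWle t
          _ = T * volume (Set.Ioc (1 + -ε) (1 + ε)) := setLIntegral_const _ _
          _ = ENNReal.ofReal (2 * ε) * T := by
              rw [Real.volume_Ioc, mul_comm]
              congr 1
              ring_nf
    _ = ENNReal.ofReal (2 * ε) * T + ∫⁻ t in Set.Icc (-ε) (1 + -ε), Wf p h t := add_comm _ _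

lemma oscp_one_le_oscp (p : ℝ) (hp : 1 ≤ p) (h : ℝ → ℝ) (ε : ℝ) :
    oscp 1 h ε ≤ oscp p h ε := by
  rcases eq_or_lt_of_le hp with heq | hp1
  · rw [← heq]
  have hp0 : (0 : ℝ) < p := lt_of_lt_of_le one_pos hp
  rw [oscp, oscp]
  simp only [one_div_one, ENNReal.rpow_one]
  obtain ⟨g, hgm, hgle, hgeq⟩ :=
    exists_measurable_le_lintegral_eq (volume.restrict II) (fun x => osc h ε x)
  rw [hgeq]
  have conj : p.HolderConjugate (Real.conjExponent p) := Real.HolderConjugate.conjExponent hp1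
  have key := ENNReal.lintegral_mul_le_Lp_mul_Lq (volume.restrict II) conj
    hgm.aemeasurable (aemeasurable_const : AEMeasurable (fun _ : ℝ => (1 : ℝ≥0∞)) _)
  simp only [Pi.mul_apply, mul_one, ENNReal.one_rpow, lintegral_one,
    Measure.restrict_apply_univ, volume_II] at key
  refine key.trans ?_
  refine ENNReal.rpow_le_rpow (lintegral_mono fun x => ?_) (by positivity)
  exact ENNReal.rpow_le_rpow (hgle x) hp0.le

/-- For `1 ≤ p < ∞` and any measurable `h : I → ℝ`,
`Var_{1,1/p}(h) ≤ Var_{p,1/p}(h) ≤ 2^{1/p} Var_p(h)`; in particular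
`UBV_p ⊆ BV_{p,1/p} ⊆ BV_{1,1/p}`. -/
theorem var_one_le_var_p_le_uvar
    (p : ℝ) (hp : 1 ≤ p) (h : ℝ → ℝ) (hm : Measurable h) :
    Varpr 1 (1 / p) h ≤ Varpr p (1 / p) h ∧
      Varpr p (1 / p) h ≤ ENNReal.ofReal ((2 : ℝ) ^ (1 / p)) * uVar p h ∧
      (uVar p h < ⊤ → Varpr p (1 / p) h < ⊤) ∧
      (Varpr p (1 / p) h < ⊤ → Varpr 1 (1 / p) h < ⊤) := by
  have hp0 : (0 : ℝ) < p := lt_of_lt_of_le one_pos hp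
  have h1 : Varpr 1 (1 / p) h ≤ Varpr p (1 / p) h := by
    refine iSup_mono fun ε => iSup_mono fun hε => ?_
    exact mul_le_mul_right (oscp_one_le_oscp p hp h ε) _
  have h2 : Varpr p (1 / p) h ≤ ENNReal.ofReal ((2 : ℝ) ^ (1 / p)) * uVar p h := by
    have hC0 : ENNReal.ofReal ((2 : ℝ) ^ (1 / p)) ≠ 0 :=
      (ENNReal.ofReal_pos.2 (Real.rpow_pos_of_pos two_pos _)).ne'
    by_cases htop : uVar p h = ⊤
    · rw [htop, ENNReal.mul_top hC0]
      exact le_top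
    refine iSup_le fun ε => iSup_le fun hε => ?_
    have hε0 : 0 < ε := hε.1
    have hosc : oscp p h ε ≤ ENNReal.ofReal ((2 * ε) ^ (1 / p)) * uVar p h := by
      rw [oscp]
      calc (∫⁻ x in II, osc h ε x ^ p) ^ (1 / p)
          ≤ (ENNReal.ofReal (2 * ε) * (uVar p h) ^ p) ^ (1 / p) :=
            ENNReal.rpow_le_rpow
              (integral_osc_bound p hp h hε0 (lt_top_iff_ne_top.2 htop)) (by positivity)
        _ = ENNReal.ofReal ((2 * ε) ^ (1 / p)) * uVar p h := by
            rw [ENNReal.mul_rpow_of_nonneg _ _ (by positivity : (0:ℝ) ≤ 1 / p),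
              ENNReal.ofReal_rpow_of_nonneg (by positivity) (by positivity),
              ← ENNReal.rpow_mul, mul_one_div_cancel hp0.ne', ENNReal.rpow_one]
    calc ENNReal.ofReal (ε ^ (-(1 / p))) * oscp p h ε
        ≤ ENNReal.ofReal (ε ^ (-(1 / p)))
            * (ENNReal.ofReal ((2 * ε) ^ (1 / p)) * uVar p h) := mul_le_mul_right hosc _
      _ = ENNReal.ofReal (ε ^ (-(1 / p)) * (2 * ε) ^ (1 / p)) * uVar p h := by
          rw [← mul_assoc, ← ENNReal.ofReal_mul (Real.rpow_nonneg hε0.le _)]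
      _ = ENNReal.ofReal ((2 : ℝ) ^ (1 / p)) * uVar p h := by
          congr 2
          rw [Real.mul_rpow (by norm_num) hε0.le]
          rw [mul_comm ((2:ℝ) ^ (1/p)) (ε ^ (1/p)), ← mul_assoc,
            ← Real.rpow_add hε0, neg_add_cancel, Real.rpow_zero, one_mul]
  refine ⟨h1, h2, ?_, ?_⟩
  · intro hfin
    exact lt_of_le_of_lt h2 (ENNReal.mul_lt_top ENNReal.ofReal_lt_top hfin)
  · intro hfin
    exact lt_of_le_of_lt h1 hfin
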